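/- If e : L → C is a canonical extension of a bounded lattice L, then every element u ∈ C satisfies u = ⨆{x ∈ J∞(C) : x ≤ u} and u = ⨅{y ∈ M∞(C) : u ≤ y}; that is, the completely join-irreducible elements join-generate C and the completely meet-irreducible elements meet-generate C. -/

import Mathlib

/-- An element `x` of a complete lattice is completely join-irreducible if
`x ∈ S` whenever `x = ⨆ S`. -/
def CompletelyJoinIrreducible {C : Type*} [CompleteLattice C] (x : C) : Prop :=
  ∀ S : Set C, x = sSup S → x ∈ S

/-- An element `y` of a complete lattice is completely meet-irreducible if
`y ∈ S` whenever `y = ⨅ S`. -/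
def CompletelyMeetIrreducible {C : Type*} [CompleteLattice C] (y : C) : Prop :=
  ∀ S : Set C, y = sInf S → y ∈ S

/-- `e : L → C` is a canonical extension of the bounded lattice `L`: an injective
bounded-lattice homomorphism into a complete lattice `C` which is dense and compact. -/
def IsCanonicalExtension {L C : Type*} [Lattice L] [BoundedOrder L] [CompleteLattice C]
    (e : L → C) : Prop :=
  Function.Injective e ∧
  (∀ a b : L, e (a ⊓ b) = e a ⊓ e b) ∧
  (∀ a b : L, e (a ⊔ b) = e a ⊔ e b) ∧
  e ⊥ = ⊥ ∧ e ⊤ = ⊤ ∧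
  -- denseness
  (∀ u : C,
    u = sSup {v : C | ∃ S : Set L, v = sInf (e '' S) ∧ v ≤ u} ∧
    u = sInf {v : C | ∃ T : Set L, v = sSup (e '' T) ∧ u ≤ v}) ∧
  -- compactness
  (∀ S T : Set L, sInf (e '' S) ≤ sSup (e '' T) →
    ∃ S' T' : Finset L, ↑S' ⊆ S ∧ ↑T' ⊆ T ∧ S'.inf id ≤ T'.sup id)

section Aux

variable {L C : Type*} [Lattice L] [BoundedOrder L] [CompleteLattice C]
  (e : L → C) (h : IsCanonicalExtension e)

lemma e_mono (h : IsCanonicalExtension e) : Monotone e := by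
  intro a b hab
  have := h.2.1 a b
  rw [inf_eq_left.2 hab] at this
  rw [this]; exact inf_le_right

lemma e_finset_inf (h : IsCanonicalExtension e) (F : Finset L) :
    e (F.inf id) = sInf (e '' ↑F) := by
  induction F using Finset.cons_induction with
  | empty => simpa using h.2.2.2.2.1
  | cons a t hat ih =>
    rw [Finset.inf_cons, h.2.1, ih]
    simp [Set.image_insert_eq, sInf_insert]

lemma e_finset_sup (h : IsCanonicalExtension e) (F : Finset L) :
    e (F.sup id) = sSup (e '' ↑F) := by
  induction F using Finset.cons_induction with
  | empty => simpa using h.2.2.2.1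
  | cons a t hat ih =>
    rw [Finset.sup_cons, h.2.2.1, ih]
    simp [Set.image_insert_eq, sSup_insert]

lemma exists_jirr (h : IsCanonicalExtension e) {x y : C} {F T : Set L}
    (hx : x = sInf (e '' F)) (hy : y = sSup (e '' T)) (hxy : ¬ x ≤ y) :
    ∃ j : C, CompletelyJoinIrreducible j ∧ j ≤ x ∧ ¬ j ≤ y := by
  set coll : Set (Set L) := {G | F ⊆ G ∧ ¬ sInf (e '' G) ≤ y} with hcoll
  have hF : F ∈ coll := ⟨subset_rfl, by rw [← hx]; exact hxy⟩
  obtain ⟨G, hFG, hGmem, hGmax⟩ :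
      ∃ G, F ⊆ G ∧ G ∈ coll ∧ ∀ a ∈ coll, G ⊆ a → a ⊆ G := by
    have hchaincond : ∀ c ⊆ coll, IsChain (· ⊆ ·) c → c.Nonempty →
        ∃ ub ∈ coll, ∀ s ∈ c, s ⊆ ub := by
      intro c hc hchain hne
      refine ⟨⋃₀ c, ⟨?_, ?_⟩, fun s hs => Set.subset_sUnion_of_mem hs⟩
      · obtain ⟨G₀, hG₀⟩ := hne
        exact (hc hG₀).1.trans (Set.subset_sUnion_of_mem hG₀)
      · intro hle
        rw [hy] at hle
        obtain ⟨F', T', hF', hT', hle'⟩ := h.2.2.2.2.2.2 (⋃₀ c) T hle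
        have hdir : DirectedOn (fun i j : Set L => i ⊆ j) c :=
          hchain.directedOn
        rw [Set.sUnion_eq_biUnion] at hF'
        obtain ⟨G, hGc, hFG'⟩ :=
          hdir.exists_mem_subset_of_finset_subset_biUnion hne hF'
        refine (hc hGc).2 ?_
        calc sInf (e '' G) ≤ sInf (e '' ↑F') := sInf_le_sInf (Set.image_mono (f := e) hFG')
          _ = e (F'.inf id) := (e_finset_inf e h F').symm
          _ ≤ e (T'.sup id) := e_mono e h hle'
          _ = sSup (e '' ↑T') := e_finset_sup e h T'
          _ ≤ sSup (e '' T) := sSup_le_sSup (Set.image_mono (f := e) hT')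
          _ = y := hy.symm
    obtain ⟨G, hFG, hGmax⟩ := zorn_subset_nonempty coll hchaincond F hF
    exact ⟨G, hFG, hGmax.1, fun a ha hGa => hGmax.2 ha hGa⟩
  set j : C := sInf (e '' G) with hj
  have hjx : j ≤ x := by
    rw [hx]; exact sInf_le_sInf (Set.image_mono (f := e) hFG)
  have hjy : ¬ j ≤ y := hGmem.2
  -- key claim: a closed element below j and not below y equals j
  have key : ∀ S : Set L, sInf (e '' S) ≤ j → ¬ sInf (e '' S) ≤ y → sInf (e '' S) = j := by
    intro S hSj hSy
    have hmem : G ∪ S ∈ coll := by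
      refine ⟨hGmem.1.trans Set.subset_union_left, ?_⟩
      have : sInf (e '' (G ∪ S)) = sInf (e '' S) := by
        rw [Set.image_union, sInf_union]
        exact inf_eq_right.2 (le_trans hSj (le_refl j))
      rw [this]; exact hSy
    have hsub : G ∪ S ⊆ G := hGmax _ hmem Set.subset_union_left
    have : S ⊆ G := Set.subset_union_right.trans hsub
    exact le_antisymm hSj (by rw [hj]; exact sInf_le_sInf (Set.image_mono (f := e) this))
  refine ⟨j, ?_, hjx, hjy⟩
  intro S hS
  -- j = sSup S; find s ∈ S with ¬ s ≤ y
  by_contra hjS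
  have : ∀ s ∈ S, s ≤ y := by
    intro s hs
    by_contra hsy
    have hsj : s ≤ j := hS ▸ le_sSup hs
    -- denseness at s
    obtain ⟨hd, -⟩ := h.2.2.2.2.2.1 s
    have : ¬ sSup {v : C | ∃ S₀ : Set L, v = sInf (e '' S₀) ∧ v ≤ s} ≤ y := hd ▸ hsy
    have hex : ∃ v ∈ {v : C | ∃ S₀ : Set L, v = sInf (e '' S₀) ∧ v ≤ s}, ¬ v ≤ y := by
      by_contra hall
      push_neg at hall
      exact this (sSup_le hall)
    obtain ⟨v, ⟨S₀, hv, hvs⟩, hvy⟩ := hex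
    have hveq : v = j := by
      rw [hv] at hvy hvs ⊢
      exact key S₀ (hvs.trans hsj) hvy
    have : s = j := le_antisymm hsj (hveq ▸ hvs)
    exact hjS (this ▸ hs)
  exact hjy (hS ▸ sSup_le this)

lemma join_generate (h : IsCanonicalExtension e) (u : C) :
    u = sSup {x : C | CompletelyJoinIrreducible x ∧ x ≤ u} := by
  set v := sSup {x : C | CompletelyJoinIrreducible x ∧ x ≤ u} with hv
  have hvu : v ≤ u := sSup_le fun x hx => hx.2
  refine le_antisymm ?_ hvu
  by_contra huv
  obtain ⟨hd, -⟩ := h.2.2.2.2.2.1 u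
  have hex : ∃ x ∈ {w : C | ∃ S : Set L, w = sInf (e '' S) ∧ w ≤ u}, ¬ x ≤ v := by
    by_contra hall
    push_neg at hall
    exact huv (hd ▸ sSup_le hall)
  obtain ⟨x, ⟨F, hxF, hxu⟩, hxv⟩ := hex
  obtain ⟨-, hdv⟩ := h.2.2.2.2.2.1 v
  have hex2 : ∃ y ∈ {w : C | ∃ T : Set L, w = sSup (e '' T) ∧ v ≤ w}, ¬ x ≤ y := by
    by_contra hall
    push_neg at hall
    exact hxv (hdv ▸ le_sInf hall)
  obtain ⟨y, ⟨T, hyT, hvy⟩, hxy⟩ := hex2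
  obtain ⟨j, hjirr, hjx, hjy⟩ := exists_jirr e h hxF hyT hxy
  exact hjy ((le_sSup (s := {x : C | CompletelyJoinIrreducible x ∧ x ≤ u})
    ⟨hjirr, hjx.trans hxu⟩).trans hvy)

lemma IsCanonicalExtension.dual (h : IsCanonicalExtension e) :
    IsCanonicalExtension (L := Lᵒᵈ) (C := Cᵒᵈ) e := by
  obtain ⟨hinj, hm, hj, hbot, htop, hdense, hcompact⟩ := h
  refine ⟨hinj, hj, hm, htop, hbot, ?_, ?_⟩
  · intro u
    obtain ⟨h1, h2⟩ := hdense u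
    exact ⟨h2, h1⟩
  · intro S T hle
    obtain ⟨S', T', hS', hT', hle'⟩ := hcompact T S hle
    exact ⟨T', S', hT', hS', hle'⟩

end Aux

/-- Canonical extensions are perfect lattices: the completely join-irreducible elements
join-generate and the completely meet-irreducible elements meet-generate. -/
theorem canonicalExtension_perfect {L C : Type*} [Lattice L] [BoundedOrder L]
    [CompleteLattice C] (e : L → C) (h : IsCanonicalExtension e) (u : C) :
    u = sSup {x : C | CompletelyJoinIrreducible x ∧ x ≤ u} ∧
    u = sInf {y : C | CompletelyMeetIrreducible y ∧ u ≤ y} := by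
  constructor
  · exact join_generate e h u
  · exact join_generate (L := Lᵒᵈ) (C := Cᵒᵈ) e h.dual u
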